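/- Let a, b, n be integers with 1 ≤ a < n, 1 ≤ b < n and a·b ≡ 1 (mod n). Then V(a,n) = V(b,n). -/

import Mathlib

/-- `(x, y) ∈ ℤ²` lies in the interior of the lattice parallelogram
`P_{a,n} = {t₁·(1,0) + t₂·(a,n) : 0 ≤ t₁, t₂ ≤ 1}`. -/
def inInteriorP (a n : ℤ) (p : ℤ × ℤ) : Prop :=
  ∃ t₁ t₂ : ℝ, 0 < t₁ ∧ t₁ < 1 ∧ 0 < t₂ ∧ t₂ < 1 ∧
    (p.1 : ℝ) = t₁ + t₂ * (a : ℝ) ∧ (p.2 : ℝ) = t₂ * (n : ℝ)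

/-- A lattice point `(x, y) ∈ ℤ²` is visible (from the origin) if `gcd(x, y) = 1`. -/
def VisiblePt (p : ℤ × ℤ) : Prop := Int.gcd p.1 p.2 = 1

/-- `V a n` is the number of visible lattice points in the interior of `P_{a,n}`. -/
noncomputable def V (a n : ℤ) : ℕ :=
  {p : ℤ × ℤ | inInteriorP a n p ∧ VisiblePt p}.ncard

lemma inInteriorP_iff (a n : ℤ) (hn : 0 < n) (p : ℤ × ℤ) :
    inInteriorP a n p ↔ 0 < p.2 ∧ p.2 < n ∧ 0 < n * p.1 - a * p.2 ∧ n * p.1 - a * p.2 < n := by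
  obtain ⟨x, y⟩ := p
  have hnR : (0:ℝ) < (n:ℝ) := by exact_mod_cast hn
  simp only [inInteriorP]
  constructor
  · rintro ⟨t₁, t₂, h1, h2, h3, h4, hx, hy⟩
    have key : (n:ℝ)*x - a*y = t₁ * n := by rw [hx, hy]; ring
    refine ⟨?_, ?_, ?_, ?_⟩
    · exact_mod_cast (show (0:ℝ) < (y:ℝ) by nlinarith)
    · exact_mod_cast (show (y:ℝ) < n by nlinarith)
    · have : (0:ℝ) < (n:ℝ)*x - a*y := by nlinarith
      exact_mod_cast (show (0:ℝ) < ((n*x - a*y : ℤ) : ℝ) by push_cast; linarith)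
    · have : (n:ℝ)*x - a*y < n := by nlinarith
      exact_mod_cast (show ((n*x - a*y : ℤ) : ℝ) < n by push_cast; linarith)
  · rintro ⟨h1, h2, h3, h4⟩
    have h1R : (0:ℝ) < (y:ℝ) := by exact_mod_cast h1
    have h2R : (y:ℝ) < n := by exact_mod_cast h2
    have h3R : (0:ℝ) < (n:ℝ)*x - a*y := by
      have := (show ((0:ℤ):ℝ) < ((n*x - a*y : ℤ) : ℝ) by exact_mod_cast h3)
      push_cast at this; linarith
    have h4R : (n:ℝ)*x - a*y < n := by
      have := (show (((n*x - a*y : ℤ)) : ℝ) < ((n:ℤ):ℝ) by exact_mod_cast h4)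
      push_cast at this; linarith
    refine ⟨((n:ℝ)*x - a*y)/n, (y:ℝ)/n, div_pos h3R hnR, ?_, div_pos h1R hnR, ?_, ?_, ?_⟩
    · rw [div_lt_one hnR]; linarith
    · rw [div_lt_one hnR]; linarith
    · field_simp; ring
    · field_simp

lemma gcd_transform (a b k n x y : ℤ) (hk : a * b = 1 + n * k) :
    Int.gcd (b * x - k * y) (n * x - a * y) = Int.gcd x y := by
  apply Nat.dvd_antisymm
  · rw [← Int.natCast_dvd_natCast]
    have h1 : (Int.gcd (b*x-k*y) (n*x-a*y) : ℤ) ∣ (b*x-k*y) := Int.gcd_dvd_left _ _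
    have h2 : (Int.gcd (b*x-k*y) (n*x-a*y) : ℤ) ∣ (n*x-a*y) := Int.gcd_dvd_right _ _
    apply Int.dvd_coe_gcd
    · have hx : a*(b*x-k*y) - k*(n*x-a*y) = x := by linear_combination x * hk
      calc (Int.gcd (b*x-k*y) (n*x-a*y) : ℤ) ∣ a*(b*x-k*y) - k*(n*x-a*y) :=
            dvd_sub (h1.mul_left a) (h2.mul_left k)
        _ = x := hx
    · have hy : n*(b*x-k*y) - b*(n*x-a*y) = y := by linear_combination y * hk
      calc (Int.gcd (b*x-k*y) (n*x-a*y) : ℤ) ∣ n*(b*x-k*y) - b*(n*x-a*y) :=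
            dvd_sub (h1.mul_left n) (h2.mul_left b)
        _ = y := hy
  · rw [← Int.natCast_dvd_natCast]
    exact Int.dvd_coe_gcd
      (dvd_sub ((Int.gcd_dvd_left _ _).mul_left b) ((Int.gcd_dvd_right _ _).mul_left k))
      (dvd_sub ((Int.gcd_dvd_left _ _).mul_left n) ((Int.gcd_dvd_right _ _).mul_left a))

lemma step_map (a b k n : ℤ) (hn : 0 < n) (hk : a * b = 1 + n * k) (p : ℤ × ℤ)
    (hp : inInteriorP a n p ∧ VisiblePt p) :
    inInteriorP b n (b * p.1 - k * p.2, n * p.1 - a * p.2) ∧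
      VisiblePt (b * p.1 - k * p.2, n * p.1 - a * p.2) := by
  obtain ⟨x, y⟩ := p
  obtain ⟨hin, hvis⟩ := hp
  rw [inInteriorP_iff a n hn] at hin
  obtain ⟨h1, h2, h3, h4⟩ := hin
  simp only at h1 h2 h3 h4
  constructor
  · rw [inInteriorP_iff b n hn]
    have key : n * (b * x - k * y) - b * (n * x - a * y) = y := by linear_combination y * hk
    refine ⟨h3, h4, ?_, ?_⟩ <;> simp only <;> rw [key] <;> assumption
  · show Int.gcd _ _ = 1
    simpa [VisiblePt, gcd_transform a b k n x y hk] using hvis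

/-- If `a·b ≡ 1 (mod n)` then `V(a,n) = V(b,n)`. -/
theorem V_inv_mod (a b n : ℤ) (ha : 1 ≤ a) (han : a < n) (hb : 1 ≤ b)
    (hbn : b < n) (hab : a * b ≡ 1 [ZMOD n]) : V a n = V b n := by
  have hn : 0 < n := by linarith
  obtain ⟨k, hk⟩ : ∃ k : ℤ, a * b = 1 + n * k := by
    obtain ⟨c, hc⟩ := Int.ModEq.dvd hab
    exact ⟨-c, by linarith⟩
  have hk' : b * a = 1 + n * k := by linarith [hk]
  set φ : ℤ × ℤ → ℤ × ℤ := fun p => (b * p.1 - k * p.2, n * p.1 - a * p.2) with hφ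
  set ψ : ℤ × ℤ → ℤ × ℤ := fun p => (a * p.1 - k * p.2, n * p.1 - b * p.2) with hψ
  have hψφ : ∀ p, ψ (φ p) = p := by
    rintro ⟨x, y⟩
    simp only [hφ, hψ, Prod.mk.injEq]
    constructor
    · linear_combination x * hk
    · linear_combination y * hk
  have hinj : Function.Injective φ := Function.LeftInverse.injective hψφ
  have himg : φ '' {p : ℤ × ℤ | inInteriorP a n p ∧ VisiblePt p}
      = {p : ℤ × ℤ | inInteriorP b n p ∧ VisiblePt p} := by
    apply Set.Subset.antisymm
    · rintro q ⟨p, hp, rfl⟩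
      exact step_map a b k n hn hk p hp
    · intro q hq
      refine ⟨ψ q, ?_, ?_⟩
      · exact step_map b a k n hn hk' q hq
      · rcases q with ⟨x, y⟩
        simp only [hφ, hψ, Prod.mk.injEq]
        constructor
        · linear_combination x * hk
        · linear_combination y * hk
  rw [V, V, ← himg, Set.ncard_image_of_injective _ hinj]
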